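/- Let Q be a medial quandle whose orbits are Q_i for i in a nonempty index set I, fix i₀ ∈ I, and for each i ∈ I choose an element q_i ∈ Q_i. Let d_i = β_{q_i} β_{q_{i₀}}⁻¹ ∈ Dis(Q) and Fix(q_i) = {d ∈ Dis(Q) : d(q_i) = q_i}. Then, regarding the Λ-module Dis(Q) as both the ambient module M and the submodule N of the construction, the data (Dis(Q), (d_i)_{i∈I}, (Fix(q_i))_{i∈I}) satisfy the hypotheses of the construction, and Q is isomorphic as a quandle to Q(Dis(Q), (d_i), (Fix(q_i))). -/

import Mathlib

open LaurentPolynomial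

set_option synthInstance.maxHeartbeats 1000000
set_option maxHeartbeats 1000000

noncomputable section

/-- The ring `Λ = ℤ[t,t⁻¹]` of Laurent polynomials with integer coefficients. -/
abbrev Λ : Type := LaurentPolynomial ℤ

/-- The variable `t ∈ Λ`. -/
abbrev tL : Λ := T 1

/-- A medial quandle structure on a type `Q`: an idempotent binary operation whose right
translations are bijections, satisfying the medial law. -/
structure MedialQuandleStr (Q : Type*) where
  op : Q → Q → Q
  idem : ∀ x, op x x = x
  bij : ∀ y, Function.Bijective fun x => op x y
  medial : ∀ w x y z, op (op w x) (op y z) = op (op w y) (op x z)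

/-- A quandle structure on a type `T`. -/
structure QuandleStr (T : Type*) where
  op : T → T → T
  idem : ∀ x, op x x = x
  bij : ∀ y, Function.Bijective fun x => op x y
  distrib : ∀ x y z, op (op x y) z = op (op x z) (op y z)

namespace MedialQuandleStr

variable {Q : Type*} (s : MedialQuandleStr Q)

/-- The translation `β_y : x ↦ x ▷ y`, as a permutation of `Q`. -/
def β (y : Q) : Equiv.Perm Q := Equiv.ofBijective _ (s.bij y)

/-- `β(Q)`: the subgroup of permutations generated by the translations. -/
def transGroup : Subgroup (Equiv.Perm Q) := Subgroup.closure (Set.range s.β)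

/-- The displacement group `Dis(Q)`, generated by the elementary displacements
`β_y β_z⁻¹`. -/
def Dis : Subgroup (Equiv.Perm Q) :=
  Subgroup.closure {d : Equiv.Perm Q | ∃ y z, d = s.β y * (s.β z)⁻¹}

/-- The orbit of `q`: the smallest subset of `Q` containing `q` and closed under the
action of `β(Q)`. -/
def orbit (q : Q) : Set Q := {x | ∃ g ∈ s.transGroup, g q = x}

end MedialQuandleStr

section Construction

variable {M : Type*} [AddCommGroup M] [Module Λ M] {I : Type*}

/-- The carrier of the quandle `Q(N,(m_i),(X_i))`: the disjoint union of the quotients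
`Q_i = N/X_i`. -/
def QCar (N : Submodule Λ M) (X : I → Submodule Λ ↥N) : Type _ :=
  Σ i : I, ↥N ⧸ X i

/-- The condition `(1-t)·X_i = 0` for all `i`. -/
def annCond (N : Submodule Λ M) (X : I → Submodule Λ ↥N) : Prop :=
  ∀ i, ∀ x ∈ X i, (1 - tL) • (x : ↥N) = 0

/-- Multiplication by `1-t`, descended from `N/X_j` to `N` (well defined since
`(1-t)·X_j = 0`). -/
def oneSubT (N : Submodule Λ M) {X : I → Submodule Λ ↥N} (h : annCond N X) (j : I) :
    (↥N ⧸ X j) →ₗ[Λ] ↥N :=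
  Submodule.liftQ (X j) ((1 - tL) • (LinearMap.id : ↥N →ₗ[Λ] ↥N))
    (fun x hx => by simpa using h j x hx)

/-- The operation of `Q(N,(m_i),(X_i))`: for `x ∈ Q_i` and `y ∈ Q_j`,
`x ▷ y = m_j - m_i + t·x + (1-t)·y + X_i ∈ Q_i`. -/
def qop (N : Submodule Λ M) (m : I → M) {X : I → Submodule Λ ↥N}
    (hm : ∀ i j, m i - m j ∈ N) (h : annCond N X) :
    QCar N X → QCar N X → QCar N X :=
  fun x y =>
    ⟨x.1, Submodule.Quotient.mk (⟨m y.1 - m x.1, hm y.1 x.1⟩ : ↥N)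
        + tL • x.2 + Submodule.Quotient.mk (oneSubT N h y.1 y.2)⟩

end Construction


namespace MedialQuandleStr

variable {Q : Type*} (s : MedialQuandleStr Q)

lemma beta_apply (y x : Q) : s.β y x = s.op x y := rfl

lemma beta_self (y : Q) : s.β y y = y := s.idem y

lemma beta_inv_self (y : Q) : (s.β y)⁻¹ y = y := by
  have := congrArg (⇑(s.β y)⁻¹) (s.beta_self y)
  simp only [Equiv.Perm.coe_inv, Equiv.symm_apply_apply] at this
  exact this.symm

lemma op_distrib (x y z : Q) : s.op (s.op x y) z = s.op (s.op x z) (s.op y z) := by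
  have := s.medial x y z z; rwa [s.idem] at this

lemma beta_mem (y : Q) : s.β y ∈ s.transGroup :=
  Subgroup.subset_closure ⟨y, rfl⟩

lemma beta_conj (x y : Q) : s.β (s.op x y) = s.β y * s.β x * (s.β y)⁻¹ := by
  have h : s.β (s.op x y) * s.β y = s.β y * s.β x := by
    ext w
    simp only [Equiv.Perm.mul_apply, beta_apply]
    exact (s.op_distrib w x y).symm
  calc s.β (s.op x y) = s.β (s.op x y) * s.β y * (s.β y)⁻¹ := by group
    _ = s.β y * s.β x * (s.β y)⁻¹ := by rw [h]

lemma beta_conj_mem {g : Equiv.Perm Q} (hg : g ∈ s.transGroup) (x : Q) :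
    s.β (g x) = g * s.β x * g⁻¹ := by
  revert x
  refine Subgroup.closure_induction
    (p := fun g _ => ∀ x, s.β (g x) = g * s.β x * g⁻¹) ?_ ?_ ?_ ?_ hg
  · rintro _ ⟨y, rfl⟩ x
    exact s.beta_conj x y
  · intro x; simp
  · intro a b _ _ ha hb x
    have h1 : s.β ((a * b) x) = s.β (a (b x)) := rfl
    rw [h1, ha, hb]; group
  · intro a _ ha x
    have h1 := ha (a⁻¹ x)
    rw [show a (a⁻¹ x) = x from a.apply_symm_apply x] at h1
    rw [h1]; group

lemma dis_le : s.Dis ≤ s.transGroup := by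
  rw [Dis, Subgroup.closure_le]
  rintro g ⟨y, z, rfl⟩
  exact mul_mem (s.beta_mem y) (inv_mem (s.beta_mem z))

lemma dis_conj {g : Equiv.Perm Q} (hg : g ∈ s.transGroup) {v : Equiv.Perm Q}
    (hv : v ∈ s.Dis) : g * v * g⁻¹ ∈ s.Dis := by
  have hmap : Subgroup.map (MulAut.conj g).toMonoidHom s.Dis ≤ s.Dis := by
    rw [Dis, MonoidHom.map_closure, Subgroup.closure_le]
    rintro _ ⟨_, ⟨y, z, rfl⟩, rfl⟩
    refine Subgroup.subset_closure ⟨g y, g z, ?_⟩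
    rw [s.beta_conj_mem hg y, s.beta_conj_mem hg z]
    show g * (s.β y * (s.β z)⁻¹) * g⁻¹ = _
    group
  exact hmap ⟨v, hv, rfl⟩

lemma trans_decomp (q₀ : Q) {g : Equiv.Perm Q} (hg : g ∈ s.transGroup) :
    ∃ v ∈ s.Dis, ∃ k : ℤ, g = v * (s.β q₀) ^ k := by
  refine Subgroup.closure_induction
    (p := fun g _ => ∃ v ∈ s.Dis, ∃ k : ℤ, g = v * (s.β q₀) ^ k) ?_ ?_ ?_ ?_ hg
  · rintro _ ⟨y, rfl⟩
    exact ⟨s.β y * (s.β q₀)⁻¹, Subgroup.subset_closure ⟨y, q₀, rfl⟩, 1, by group⟩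
  · exact ⟨1, one_mem _, 0, by simp⟩
  · rintro a b _ _ ⟨v, hv, k, rfl⟩ ⟨w, hw, l, rfl⟩
    have hβk : (s.β q₀) ^ k ∈ s.transGroup := zpow_mem (s.beta_mem q₀) k
    refine ⟨v * ((s.β q₀) ^ k * w * ((s.β q₀) ^ k)⁻¹),
      mul_mem hv (s.dis_conj hβk hw), k + l, ?_⟩
    rw [zpow_add]; group
  · rintro a _ ⟨v, hv, k, rfl⟩
    have hβk : ((s.β q₀) ^ k)⁻¹ ∈ s.transGroup := inv_mem (zpow_mem (s.beta_mem q₀) k)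
    refine ⟨((s.β q₀) ^ k)⁻¹ * v⁻¹ * (((s.β q₀) ^ k)⁻¹)⁻¹,
      s.dis_conj hβk (inv_mem hv), -k, ?_⟩
    rw [zpow_neg]; group

lemma mem_orbit_iff (q₀ x : Q) : x ∈ s.orbit q₀ ↔ ∃ v ∈ s.Dis, v q₀ = x := by
  constructor
  · rintro ⟨g, hg, rfl⟩
    obtain ⟨v, hv, k, rfl⟩ := s.trans_decomp q₀ hg
    refine ⟨v, hv, ?_⟩
    have hfix : ((s.β q₀) ^ k) q₀ = q₀ :=
      Function.IsFixedPt.perm_zpow (s.beta_self q₀) k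
    simp [Equiv.Perm.mul_apply, hfix]
  · rintro ⟨v, hv, rfl⟩
    exact ⟨v, s.dis_le hv, rfl⟩

lemma fix_comm {v : Equiv.Perm Q} (hv : v ∈ s.Dis) {q₀ : Q} (h : v q₀ = q₀) :
    s.β q₀ * v * (s.β q₀)⁻¹ = v := by
  have h1 := s.beta_conj_mem (s.dis_le hv) q₀
  rw [h] at h1
  have h2 : s.β q₀ * v = v * s.β q₀ := by
    conv_lhs => rw [h1]
    group
  rw [h2]; group

end MedialQuandleStr

/-- Every medial quandle is an instance of the construction: if the
orbits of `Q` are indexed by a nonempty set `I` with chosen representatives `q i`, `i₀`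
is a fixed index, `D` is the `Λ`-module `Dis(Q)` (presented as an abstract `Λ`-module
together with a bijection `e` to `Dis(Q)` translating addition into composition and
scalar multiplication by `t` into conjugation by a translation), `d i` corresponds to
the elementary displacement `β_{q i} β_{q i₀}⁻¹`, and `X i` corresponds to
`Fix(q i)`, then the data `(Dis(Q), (d i), (Fix (q i)))` satisfy the hypotheses of the
construction and `Q(Dis(Q), (d i), (Fix (q i)))` is isomorphic to `Q` as a quandle. -/
theorem stmt6 {Q : Type*} (s : MedialQuandleStr Q) {I : Type*} [Nonempty I]
    (q : I → Q) (horb : ∀ x : Q, ∃! i : I, x ∈ s.orbit (q i)) (i₀ : I)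
    {D : Type*} [AddCommGroup D] [Module Λ D]
    (e : D ≃ ↥s.Dis)
    (hadd : ∀ a b : D, (e (a + b)).val = (e a).val * (e b).val)
    (hsmul : ∀ (a : D) (q' : Q), (e (tL • a)).val = s.β q' * (e a).val * (s.β q')⁻¹)
    (d : I → D) (hd : ∀ i, (e (d i)).val = s.β (q i) * (s.β (q i₀))⁻¹)
    (X : I → Submodule Λ ↥(⊤ : Submodule Λ D))
    (hX : ∀ (i : I) (a : ↥(⊤ : Submodule Λ D)), a ∈ X i ↔ (e a.val).val (q i) = q i) :
    ∃ (hm : ∀ i j : I, d i - d j ∈ (⊤ : Submodule Λ D))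
      (hann : annCond (⊤ : Submodule Λ D) X)
      (F : QCar (⊤ : Submodule Λ D) X ≃ Q),
      ∀ x y, F (qop (⊤ : Submodule Λ D) d hm hann x y) = s.op (F x) (F y) := by
  have hm : ∀ i j : I, d i - d j ∈ (⊤ : Submodule Λ D) := fun _ _ => Submodule.mem_top
  -- basic consequences of hadd
  have he1 : (e 0).val = 1 := by
    have h := hadd 0 0
    rw [add_zero] at h
    exact left_eq_mul.mp h
  have heneg : ∀ a : D, (e (-a)).val = ((e a).val)⁻¹ := by
    intro a
    have h := hadd (-a) a
    rw [neg_add_cancel, he1] at h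
    exact eq_inv_of_mul_eq_one_left h.symm
  have hesub : ∀ a b : D, (e (a - b)).val = (e a).val * ((e b).val)⁻¹ := by
    intro a b
    rw [sub_eq_add_neg, hadd, heneg]
  -- annihilation condition
  have hann : annCond (⊤ : Submodule Λ D) X := by
    intro i x hx
    have hfix : (e x.val).val (q i) = q i := (hX i x).mp hx
    have hc := s.fix_comm (e x.val).2 hfix
    have hval : (e (tL • x.val)).val = (e x.val).val := by
      rw [hsmul x.val (q i)]; exact hc
    have h2 : tL • x.val = x.val := e.injective (Subtype.ext hval)
    apply Subtype.ext
    rw [Submodule.coe_smul, ZeroMemClass.coe_zero, sub_smul, one_smul, h2, sub_self]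
  -- the map
  have hwd : ∀ (i : I) (a b : ↥(⊤ : Submodule Λ D)), a - b ∈ X i →
      (e a.val).val (q i) = (e b.val).val (q i) := by
    intro i a b hab
    have hfix : (e (a - b).val).val (q i) = q i := (hX i _).mp hab
    have hsplit : (e a.val).val = (e b.val).val * (e (a.val - b.val)).val := by
      have h := hadd b.val (a.val - b.val)
      have hv : b.val + (a.val - b.val) = a.val := by abel
      rw [hv] at h
      exact h
    have hfix' : (e (a.val - b.val)).val (q i) = q i := by simpa using hfix
    rw [hsplit, Equiv.Perm.mul_apply, hfix']
  let F0 : QCar (⊤ : Submodule Λ D) X → Q := fun x =>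
    Quotient.liftOn' x.2 (fun a => (e a.val).val (q x.1))
      (fun a b hab => hwd x.1 a b ((Submodule.quotientRel_def _).mp hab))
  have hF0 : ∀ (i : I) (a : ↥(⊤ : Submodule Λ D)),
      F0 ⟨i, Submodule.Quotient.mk a⟩ = (e a.val).val (q i) := fun i a => rfl
  -- value lies in orbit
  have horbmem : ∀ (i : I) (a : ↥(⊤ : Submodule Λ D)),
      (e a.val).val (q i) ∈ s.orbit (q i) := by
    intro i a
    exact (s.mem_orbit_iff _ _).mpr ⟨(e a.val).val, (e a.val).2, rfl⟩
  -- injectivity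
  have hinj : Function.Injective F0 := by
    rintro ⟨i, ca⟩ ⟨j, cb⟩ h
    obtain ⟨a, rfl⟩ := Submodule.Quotient.mk_surjective _ ca
    obtain ⟨b, rfl⟩ := Submodule.Quotient.mk_surjective _ cb
    rw [hF0, hF0] at h
    have hij : i = j := by
      refine ((horb ((e a.val).val (q i))).unique (horbmem i a) ?_)
      rw [h]; exact horbmem j b
    subst hij
    have hsplit : (e a.val).val = (e b.val).val * (e (a.val - b.val)).val := by
      have h' := hadd b.val (a.val - b.val)
      have hv : b.val + (a.val - b.val) = a.val := by abel
      rw [hv] at h'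
      exact h'
    have hfix : (e (a.val - b.val)).val (q i) = q i := by
      rw [hsplit, Equiv.Perm.mul_apply] at h
      exact (e b.val).val.injective h
    have : a - b ∈ X i := by
      rw [hX i (a - b)]
      simpa using hfix
    have hq : (Submodule.Quotient.mk a : ↥(⊤ : Submodule Λ D) ⧸ X i)
        = Submodule.Quotient.mk b := (Submodule.Quotient.eq _).mpr this
    rw [hq]
  -- surjectivity
  have hsurj : Function.Surjective F0 := by
    intro x
    obtain ⟨i, hi, _⟩ := horb x
    obtain ⟨v, hv, hvx⟩ := (s.mem_orbit_iff _ _).mp hi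
    refine ⟨⟨i, Submodule.Quotient.mk ⟨e.symm ⟨v, hv⟩, Submodule.mem_top⟩⟩, ?_⟩
    rw [hF0]
    simp only [Equiv.apply_symm_apply]
    exact hvx
  have hbij : Function.Bijective F0 := ⟨hinj, hsurj⟩
  refine ⟨hm, hann, Equiv.ofBijective F0 hbij, ?_⟩
  rintro ⟨i, ca⟩ ⟨j, cb⟩
  obtain ⟨a, rfl⟩ := Submodule.Quotient.mk_surjective _ ca
  obtain ⟨b, rfl⟩ := Submodule.Quotient.mk_surjective _ cb
  show F0 (qop _ d hm hann ⟨i, Submodule.Quotient.mk a⟩ ⟨j, Submodule.Quotient.mk b⟩)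
    = s.op (F0 ⟨i, Submodule.Quotient.mk a⟩) (F0 ⟨j, Submodule.Quotient.mk b⟩)
  set A := (e a.val).val with hA
  set B := (e b.val).val with hB
  -- compute the second component of qop
  have hone : oneSubT (⊤ : Submodule Λ D) hann j (Submodule.Quotient.mk b)
      = (1 - tL) • b := by
    simp [oneSubT]
  have hqop : qop (⊤ : Submodule Λ D) d hm hann ⟨i, Submodule.Quotient.mk a⟩
      ⟨j, Submodule.Quotient.mk b⟩
      = ⟨i, Submodule.Quotient.mk
          (⟨d j - d i, hm j i⟩ + tL • a + (1 - tL) • b)⟩ := by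
    show (⟨i, _⟩ : QCar (⊤ : Submodule Λ D) X) = _
    congr 1
  rw [hqop, hF0, hF0, hF0]
  -- the value of e on the combination
  have hzval : (⟨d j - d i, hm j i⟩ + tL • a + (1 - tL) • b
      : ↥(⊤ : Submodule Λ D)).val
      = (b.val - tL • b.val) + ((d j - d i) + tL • a.val) := by
    push_cast
    rw [sub_smul, one_smul]
    abel
  have key : (e ((⟨d j - d i, hm j i⟩ + tL • a + (1 - tL) • b
      : ↥(⊤ : Submodule Λ D)).val)).val
      = B * s.β (q j) * B⁻¹ * A * (s.β (q i))⁻¹ := by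
    rw [hzval, hadd, hadd, hesub, hesub, hsmul b.val (q j), hsmul a.val (q i),
      hd j, hd i, ← hA, ← hB]
    group
  rw [key]
  -- right-hand side
  have hβB : s.β (B (q j)) = B * s.β (q j) * B⁻¹ :=
    s.beta_conj_mem (s.dis_le (e b.val).2) (q j)
  show (B * s.β (q j) * B⁻¹ * A * (s.β (q i))⁻¹) (q i) = s.op (A (q i)) (B (q j))
  rw [← s.beta_apply, hβB]
  simp only [Equiv.Perm.mul_apply]
  rw [s.beta_inv_self]
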